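/- arXiv:1501.05062 — 3 statements merged into one kernel-verified Lean document; each statement's English description precedes it below -/
import Mathlib

section
/- Refined Fatou lemma of Brezis–Lieb: Let 0 < p < ∞ and let (f_n) be a sequence of measurable functions from ℝ^d to ℂ such that limsup_{n→∞} ∫_{ℝ^d} |f_n(x)|^p dx < ∞ and f_n → f almost everywhere on ℝ^d. Then ∫_{ℝ^d} | |f_n(x)|^p − |f_n(x) − f(x)|^p − |f(x)|^p | dx → 0 as n → ∞. -/
open MeasureTheory Filter ENNReal

-- lemma C (real)
lemma lemC {p : ℝ} (hp : 0 ≤ p) {a b : ℝ} (ha : 0 ≤ a) (hb : 0 ≤ b) :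
    (a + b) ^ p ≤ 2 ^ p * (a ^ p + b ^ p) := by
  have h1 : a + b ≤ 2 * max a b := by
    rcases le_total a b with h | h <;> simp [max_eq_right, max_eq_left, h] <;> linarith
  have h2 : (a + b) ^ p ≤ (2 * max a b) ^ p :=
    Real.rpow_le_rpow (by positivity) h1 hp
  have h3 : (2 * max a b) ^ p = 2 ^ p * (max a b) ^ p :=
    Real.mul_rpow (by norm_num) (le_trans ha (le_max_left _ _))
  have h4 : (max a b) ^ p ≤ a ^ p + b ^ p := by
    rcases max_cases a b with ⟨h, _⟩ | ⟨h, _⟩ <;> rw [h]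
    · nlinarith [Real.rpow_nonneg hb p]
    · nlinarith [Real.rpow_nonneg ha p]
  calc (a + b) ^ p ≤ 2 ^ p * (max a b) ^ p := by rw [← h3]; exact h2
    _ ≤ 2 ^ p * (a ^ p + b ^ p) := by
        have : (0:ℝ) ≤ (2:ℝ) ^ p := Real.rpow_nonneg (by norm_num) p
        nlinarith

-- lemma C (ennreal)
lemma lemCE {p : ℝ} (hp : 0 ≤ p) (u v : ℝ≥0∞) :
    (u + v) ^ p ≤ 2 ^ p * (u ^ p + v ^ p) := by
  have h1 : u + v ≤ 2 * max u v := by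
    rcases le_total u v with h | h <;> simp [max_eq_right, max_eq_left, h]
    · calc u + v ≤ v + v := by gcongr
        _ = 2 * v := (two_mul v).symm
    · calc u + v ≤ u + u := by gcongr
        _ = 2 * u := (two_mul u).symm
  calc (u + v) ^ p ≤ (2 * max u v) ^ p := ENNReal.rpow_le_rpow h1 hp
    _ = 2 ^ p * (max u v) ^ p := ENNReal.mul_rpow_of_nonneg _ _ hp
    _ ≤ 2 ^ p * (u ^ p + v ^ p) := by
        gcongr
        rcases max_cases u v with ⟨h, _⟩ | ⟨h, _⟩ <;> rw [h]
        · exact le_add_right le_rfl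
        · exact le_add_left le_rfl

-- lemma A
lemma lemA {p δ : ℝ} (hp : 0 < p) (hδ : 0 < δ) :
    ∃ C : ℝ, 0 ≤ C ∧ ∀ x y : ℝ, 0 ≤ x → 0 ≤ y →
      (x + y) ^ p ≤ (1 + δ) * x ^ p + C * y ^ p := by
  set η : ℝ := (1 + δ) ^ p⁻¹ - 1 with hη_def
  have hbase : (1:ℝ) < 1 + δ := by linarith
  have hη : 0 < η := by
    have : (1:ℝ) < (1 + δ) ^ p⁻¹ :=
      Real.one_lt_rpow_iff_of_pos (by linarith) |>.mpr (Or.inl ⟨hbase, by positivity⟩)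
    simp [hη_def]; linarith
  have hkey : (1 + η) ^ p = 1 + δ := by
    have : (1:ℝ) + η = (1 + δ) ^ p⁻¹ := by simp [hη_def]
    rw [this, ← Real.rpow_mul (by linarith), inv_mul_cancel₀ hp.ne', Real.rpow_one]
  refine ⟨((1 + η) / η) ^ p, Real.rpow_nonneg (by positivity) p, fun x y hx hy => ?_⟩
  rcases le_total y (η * x) with h | h
  · have h1 : x + y ≤ (1 + η) * x := by nlinarith
    have h2 : (x + y) ^ p ≤ ((1 + η) * x) ^ p :=
      Real.rpow_le_rpow (by positivity) h1 hp.le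
    have h3 : ((1 + η) * x) ^ p = (1 + η) ^ p * x ^ p := Real.mul_rpow (by positivity) hx
    have h4 : (0:ℝ) ≤ ((1 + η) / η) ^ p * y ^ p := by positivity
    calc (x + y) ^ p ≤ (1 + η) ^ p * x ^ p := by rw [← h3]; exact h2
      _ = (1 + δ) * x ^ p := by rw [hkey]
      _ ≤ (1 + δ) * x ^ p + ((1 + η) / η) ^ p * y ^ p := by linarith
  · have hx' : x ≤ y / η := by rw [le_div_iff₀ hη]; nlinarith
    have h1 : x + y ≤ ((1 + η) / η) * y := by
      have : ((1 + η) / η) * y = y / η + y := by field_simp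
      rw [this]; linarith
    have h2 : (x + y) ^ p ≤ (((1 + η) / η) * y) ^ p :=
      Real.rpow_le_rpow (by positivity) h1 hp.le
    have h3 : (((1 + η) / η) * y) ^ p = ((1 + η) / η) ^ p * y ^ p :=
      Real.mul_rpow (by positivity) hy
    have h4 : (0:ℝ) ≤ (1 + δ) * x ^ p := by positivity
    calc (x + y) ^ p ≤ ((1 + η) / η) ^ p * y ^ p := by rw [← h3]; exact h2
      _ ≤ (1 + δ) * x ^ p + ((1 + η) / η) ^ p * y ^ p := by linarith

-- lemma B: the key pointwise estimate
lemma lemB {p δ C : ℝ} (hp : 0 < p) (hδ : 0 < δ) (hC : 0 ≤ C)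
    (hCkey : ∀ x y : ℝ, 0 ≤ x → 0 ≤ y → (x + y) ^ p ≤ (1 + δ) * x ^ p + C * y ^ p)
    {u v w : ℝ} (hu : 0 ≤ u) (hv : 0 ≤ v) (hw : 0 ≤ w)
    (huvw : u ≤ v + w) (hvuw : v ≤ u + w) :
    |u ^ p - v ^ p - w ^ p| ≤ (δ * 2 ^ p) * v ^ p + (C + δ * 2 ^ p + 1) * w ^ p := by
  have h2p : (1:ℝ) ≤ 2 ^ p := Real.one_le_rpow one_le_two hp.le
  have hup : 0 ≤ u ^ p := Real.rpow_nonneg hu p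
  have hvp : 0 ≤ v ^ p := Real.rpow_nonneg hv p
  have hwp : 0 ≤ w ^ p := Real.rpow_nonneg hw p
  have habs : |u ^ p - v ^ p - w ^ p| ≤ |u ^ p - v ^ p| + w ^ p := by
    calc |u ^ p - v ^ p - w ^ p| ≤ |u ^ p - v ^ p| + |w ^ p| := abs_sub _ _
      _ = |u ^ p - v ^ p| + w ^ p := by rw [abs_of_nonneg hwp]
  have hmain : |u ^ p - v ^ p| ≤ (δ * 2 ^ p) * v ^ p + (C + δ * 2 ^ p) * w ^ p := by
    rcases le_total v u with h | h
    · have h1 : v ^ p ≤ u ^ p := Real.rpow_le_rpow hv h hp.le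
      rw [abs_of_nonneg (by linarith)]
      have h2 : u ^ p ≤ (v + w) ^ p := Real.rpow_le_rpow hu huvw hp.le
      have h3 := hCkey v w hv hw
      nlinarith [mul_nonneg hδ.le (mul_nonneg (sub_nonneg.mpr h2p) hvp),
        mul_nonneg (mul_nonneg hδ.le (Real.rpow_nonneg (by norm_num : (0:ℝ) ≤ 2) p)) hwp]
    · have h1 : u ^ p ≤ v ^ p := Real.rpow_le_rpow hu h hp.le
      rw [abs_of_nonpos (by linarith), neg_sub]
      have h2 : v ^ p ≤ (u + w) ^ p := Real.rpow_le_rpow hv hvuw hp.le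
      have h3 := hCkey u w hu hw
      have h4 : u ^ p ≤ (v + w) ^ p := Real.rpow_le_rpow hu (by linarith) hp.le
      have h5 : (v + w) ^ p ≤ 2 ^ p * (v ^ p + w ^ p) := lemC hp.le hv hw
      nlinarith [mul_nonneg hδ.le hup, mul_nonneg hδ.le hvp, mul_nonneg hδ.le hwp,
        mul_nonneg hδ.le (mul_nonneg (sub_nonneg.mpr h2p) hvp),
        mul_nonneg hδ.le (mul_nonneg (sub_nonneg.mpr h2p) hwp)]
  linarith

/-- **Refined Fatou lemma (Brezis–Lieb)**: if `0 < p < ∞`, the `L^p` masses of the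
`f n` stay bounded (their `limsup` is finite), and `f n → f` almost everywhere on `ℝ^d`,
then `∫ | |f n|^p − |f n − f|^p − |f|^p | → 0`. -/
theorem refined_fatou_brezis_lieb
    (d : ℕ) (p : ℝ) (hp : 0 < p)
    (f : ℕ → EuclideanSpace ℝ (Fin d) → ℂ) (F : EuclideanSpace ℝ (Fin d) → ℂ)
    (hmeas : ∀ n, Measurable (f n))
    (hbdd : Filter.limsup (fun n => ∫⁻ x, (‖f n x‖₊ : ℝ≥0∞) ^ p) Filter.atTop < ⊤)
    (hae : ∀ᵐ x : EuclideanSpace ℝ (Fin d), Tendsto (fun n => f n x) atTop (nhds (F x))) :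
    Tendsto (fun n => ∫ x : EuclideanSpace ℝ (Fin d),
        |‖f n x‖ ^ p - ‖f n x - F x‖ ^ p - ‖F x‖ ^ p|) atTop (nhds 0) := by
  have hμ : ∀ n, AEMeasurable (f n) (volume : Measure (EuclideanSpace ℝ (Fin d))) :=
    fun n => (hmeas n).aemeasurable
  have hF : AEMeasurable F (volume : Measure (EuclideanSpace ℝ (Fin d))) :=
    aemeasurable_of_tendsto_metrizable_ae atTop hμ hae
  -- measurability facts
  have hΦmeas : ∀ n, AEMeasurable (fun x => (‖f n x‖₊ : ℝ≥0∞) ^ p) volume :=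
    fun n => (hμ n).nnnorm.coe_nnreal_ennreal.pow_const p
  have hvmeas : ∀ n, AEMeasurable (fun x => ‖f n x - F x‖ ^ p) volume :=
    fun n => (((hμ n).sub hF).norm).pow_const p
  have hGmeasR : ∀ n, AEMeasurable
      (fun x => |‖f n x‖ ^ p - ‖f n x - F x‖ ^ p - ‖F x‖ ^ p|) volume :=
    fun n => by
      simpa [Real.norm_eq_abs] using
        ((((hμ n).norm.pow_const p).sub (hvmeas n)).sub (hF.norm.pow_const p)).norm
  -- the key lintegral convergence
  have key : Tendsto (fun n => ∫⁻ x,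
      ENNReal.ofReal (|‖f n x‖ ^ p - ‖f n x - F x‖ ^ p - ‖F x‖ ^ p|)) atTop (nhds 0) := by
    obtain ⟨M, hMtop, hM⟩ : ∃ M : ℝ≥0∞, M ≠ ⊤ ∧
        ∀ᶠ n in atTop, (∫⁻ x, (‖f n x‖₊ : ℝ≥0∞) ^ p) ≤ M := by
      refine ⟨limsup (fun n => ∫⁻ x, (‖f n x‖₊ : ℝ≥0∞) ^ p) atTop + 1, ?_, ?_⟩
      · exact ENNReal.add_ne_top.mpr ⟨hbdd.ne, ENNReal.one_ne_top⟩
      · exact (eventually_lt_of_limsup_lt (ENNReal.lt_add_right hbdd.ne one_ne_zero)).mono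
          fun n hn => hn.le
    have hFM : (∫⁻ x, (‖F x‖₊ : ℝ≥0∞) ^ p) ≤ M := by
      have heq : (fun x => (‖F x‖₊ : ℝ≥0∞) ^ p)
          =ᵐ[volume] fun x => liminf (fun n => (‖f n x‖₊ : ℝ≥0∞) ^ p) atTop := by
        filter_upwards [hae] with x hx
        have ht : Tendsto (fun n => (‖f n x‖₊ : ℝ≥0∞) ^ p) atTop
            (nhds ((‖F x‖₊ : ℝ≥0∞) ^ p)) :=
          (ENNReal.continuous_rpow_const.tendsto _).comp
            ((ENNReal.continuous_coe.tendsto _).comp ((continuous_nnnorm.tendsto _).comp hx))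
        exact ht.liminf_eq.symm
      calc (∫⁻ x, (‖F x‖₊ : ℝ≥0∞) ^ p)
          = ∫⁻ x, liminf (fun n => (‖f n x‖₊ : ℝ≥0∞) ^ p) atTop := lintegral_congr_ae heq
        _ ≤ liminf (fun n => ∫⁻ x, (‖f n x‖₊ : ℝ≥0∞) ^ p) atTop := lintegral_liminf_le' hΦmeas
        _ ≤ limsup (fun n => ∫⁻ x, (‖f n x‖₊ : ℝ≥0∞) ^ p) atTop := liminf_le_limsup
        _ ≤ M := limsup_le_of_le (by isBoundedDefault) hM
    set M₂ : ℝ≥0∞ := 2 ^ p * (M + M) with hM₂def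
    have hM₂top : M₂ ≠ ⊤ := ENNReal.mul_ne_top
      (ENNReal.rpow_ne_top_of_nonneg hp.le ENNReal.ofNat_ne_top)
      (ENNReal.add_ne_top.mpr ⟨hMtop, hMtop⟩)
    have hsub : ∀ᶠ n in atTop, (∫⁻ x, (‖f n x - F x‖₊ : ℝ≥0∞) ^ p) ≤ M₂ := by
      filter_upwards [hM] with n hn
      have hpt : ∀ x, (‖f n x - F x‖₊ : ℝ≥0∞) ^ p
          ≤ 2 ^ p * ((‖f n x‖₊ : ℝ≥0∞) ^ p + (‖F x‖₊ : ℝ≥0∞) ^ p) := by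
        intro x
        calc (‖f n x - F x‖₊ : ℝ≥0∞) ^ p
            ≤ ((‖f n x‖₊ : ℝ≥0∞) + (‖F x‖₊ : ℝ≥0∞)) ^ p := by
              apply ENNReal.rpow_le_rpow _ hp.le
              exact_mod_cast nnnorm_sub_le _ _
          _ ≤ 2 ^ p * ((‖f n x‖₊ : ℝ≥0∞) ^ p + (‖F x‖₊ : ℝ≥0∞) ^ p) := lemCE hp.le _ _
      calc (∫⁻ x, (‖f n x - F x‖₊ : ℝ≥0∞) ^ p)
          ≤ ∫⁻ x, 2 ^ p * ((‖f n x‖₊ : ℝ≥0∞) ^ p + (‖F x‖₊ : ℝ≥0∞) ^ p) :=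
            lintegral_mono hpt
        _ = 2 ^ p * ((∫⁻ x, (‖f n x‖₊ : ℝ≥0∞) ^ p) + ∫⁻ x, (‖F x‖₊ : ℝ≥0∞) ^ p) := by
            rw [lintegral_const_mul' _ _
              (ENNReal.rpow_ne_top_of_nonneg hp.le ENNReal.ofNat_ne_top),
              lintegral_add_left' (hΦmeas n)]
        _ ≤ 2 ^ p * (M + M) := mul_le_mul_right (add_le_add hn hFM) _
    rw [ENNReal.tendsto_atTop_zero]
    intro ε hε
    obtain ⟨δ', hδ'pos, hδ'⟩ : ∃ δ' : ℝ, 0 < δ' ∧ ENNReal.ofReal δ' * M₂ ≤ ε / 2 := by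
      rcases eq_or_ne M₂ 0 with h0 | h0
      · exact ⟨1, one_pos, by simp [h0]⟩
      · have hnum : min (ε / 2) 1 ≠ 0 :=
          (lt_min (ENNReal.div_pos hε.ne' ENNReal.ofNat_ne_top) zero_lt_one).ne'
        have hnumtop : min (ε / 2) 1 ≠ ⊤ :=
          ne_top_of_le_ne_top ENNReal.one_ne_top (min_le_right _ _)
        have hdivtop : min (ε / 2) 1 / M₂ ≠ ⊤ := by
          simp [ENNReal.div_eq_top, hnumtop, h0]
        refine ⟨(min (ε / 2) 1 / M₂).toReal,
          ENNReal.toReal_pos (ENNReal.div_pos hnum hM₂top).ne' hdivtop, ?_⟩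
        rw [ENNReal.ofReal_toReal hdivtop, ENNReal.div_mul_cancel h0 hM₂top]
        exact min_le_left _ _
    have h2ppos : (0:ℝ) < 2 ^ p := Real.rpow_pos_of_pos two_pos p
    have hδpos : 0 < δ' / 2 ^ p := div_pos hδ'pos h2ppos
    obtain ⟨C, hC0, hCkey⟩ := lemA hp hδpos
    have hδδ' : δ' / 2 ^ p * 2 ^ p = δ' := div_mul_cancel₀ _ h2ppos.ne'
    have hC'0 : (0:ℝ) ≤ C + δ' / 2 ^ p * 2 ^ p + 1 := by nlinarith
    -- pointwise bound via lemB
    have hpt : ∀ n x, |‖f n x‖ ^ p - ‖f n x - F x‖ ^ p - ‖F x‖ ^ p|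
        ≤ (δ' / 2 ^ p * 2 ^ p) * ‖f n x - F x‖ ^ p
          + (C + δ' / 2 ^ p * 2 ^ p + 1) * ‖F x‖ ^ p := by
      intro n x
      apply lemB hp hδpos hC0 hCkey (norm_nonneg _) (norm_nonneg _) (norm_nonneg _)
      · calc ‖f n x‖ = ‖f n x - F x + F x‖ := by rw [sub_add_cancel]
          _ ≤ ‖f n x - F x‖ + ‖F x‖ := norm_add_le _ _
      · exact norm_sub_le _ _
    -- the auxiliary function h
    set h : ℕ → EuclideanSpace ℝ (Fin d) → ℝ := fun n x =>
      max (|‖f n x‖ ^ p - ‖f n x - F x‖ ^ p - ‖F x‖ ^ p|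
        - (δ' / 2 ^ p * 2 ^ p) * ‖f n x - F x‖ ^ p) 0 with hhdef
    have hh_nonneg : ∀ n x, 0 ≤ h n x := fun n x => le_max_right _ _
    have hh_le : ∀ n x, h n x ≤ (C + δ' / 2 ^ p * 2 ^ p + 1) * ‖F x‖ ^ p := by
      intro n x
      apply max_le _ (by positivity)
      have := hpt n x; linarith
    have hh_G : ∀ n x, |‖f n x‖ ^ p - ‖f n x - F x‖ ^ p - ‖F x‖ ^ p|
        ≤ h n x + (δ' / 2 ^ p * 2 ^ p) * ‖f n x - F x‖ ^ p := by
      intro n x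
      have := le_max_left (|‖f n x‖ ^ p - ‖f n x - F x‖ ^ p - ‖F x‖ ^ p|
        - (δ' / 2 ^ p * 2 ^ p) * ‖f n x - F x‖ ^ p) (0:ℝ)
      linarith
    have hh_le_G : ∀ n x, h n x ≤ |‖f n x‖ ^ p - ‖f n x - F x‖ ^ p - ‖F x‖ ^ p| := by
      intro n x
      apply max_le _ (abs_nonneg _)
      have : (0:ℝ) ≤ (δ' / 2 ^ p * 2 ^ p) * ‖f n x - F x‖ ^ p := by positivity
      linarith
    have hhmeas : ∀ n, AEMeasurable (fun x => ENNReal.ofReal (h n x)) volume := fun n =>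
      (((hGmeasR n).sub ((hvmeas n).const_mul _)).max aemeasurable_const).ennreal_ofReal
    -- a.e. convergence of |...| to 0
    have hG0 : ∀ᵐ x : EuclideanSpace ℝ (Fin d),
        Tendsto (fun n => |‖f n x‖ ^ p - ‖f n x - F x‖ ^ p - ‖F x‖ ^ p|) atTop (nhds 0) := by
      filter_upwards [hae] with x hx
      have h1 : Tendsto (fun n => ‖f n x‖) atTop (nhds ‖F x‖) :=
        (continuous_norm.tendsto _).comp hx
      have h2 : Tendsto (fun n => ‖f n x - F x‖) atTop (nhds 0) := by
        have h2' : Tendsto (fun n => f n x - F x) atTop (nhds (F x - F x)) :=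
          hx.sub tendsto_const_nhds
        simpa [Function.comp_def] using (continuous_norm.tendsto _).comp h2'
      have h1p : Tendsto (fun n => ‖f n x‖ ^ p) atTop (nhds (‖F x‖ ^ p)) :=
        ((Real.continuousAt_rpow_const _ p (Or.inr hp.le)).tendsto).comp h1
      have h2p : Tendsto (fun n => ‖f n x - F x‖ ^ p) atTop (nhds 0) := by
        have := ((Real.continuousAt_rpow_const 0 p (Or.inr hp.le)).tendsto).comp h2
        simpa [Function.comp_def, Real.zero_rpow hp.ne'] using this
      have h3 : Tendsto (fun n => ‖f n x‖ ^ p - ‖f n x - F x‖ ^ p - ‖F x‖ ^ p) atTop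
          (nhds (‖F x‖ ^ p - 0 - ‖F x‖ ^ p)) := (h1p.sub h2p).sub tendsto_const_nhds
      have h4 := h3.abs
      simpa using h4
    have hh0 : ∀ᵐ x : EuclideanSpace ℝ (Fin d),
        Tendsto (fun n => ENNReal.ofReal (h n x)) atTop (nhds 0) := by
      filter_upwards [hG0] with x hx
      have : Tendsto (fun n => h n x) atTop (nhds 0) :=
        squeeze_zero (fun n => hh_nonneg n x) (fun n => hh_le_G n x) hx
      have := (ENNReal.continuous_ofReal.tendsto 0).comp this
      simpa [Function.comp_def] using this
    -- dominated convergence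
    have hDCT : Tendsto (fun n => ∫⁻ x, ENNReal.ofReal (h n x)) atTop (nhds 0) := by
      have hd := tendsto_lintegral_of_dominated_convergence'
        (μ := (volume : Measure (EuclideanSpace ℝ (Fin d))))
        (F := fun n x => ENNReal.ofReal (h n x)) (f := fun _ => (0:ℝ≥0∞))
        (fun x => ENNReal.ofReal (C + δ' / 2 ^ p * 2 ^ p + 1) * (‖F x‖₊ : ℝ≥0∞) ^ p)
        hhmeas ?_ ?_ ?_
      · simpa using hd
      · intro n
        refine ae_of_all _ fun x => ?_
        calc ENNReal.ofReal (h n x)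
            ≤ ENNReal.ofReal ((C + δ' / 2 ^ p * 2 ^ p + 1) * ‖F x‖ ^ p) :=
              ENNReal.ofReal_le_ofReal (hh_le n x)
          _ = ENNReal.ofReal (C + δ' / 2 ^ p * 2 ^ p + 1) * ENNReal.ofReal (‖F x‖ ^ p) :=
              ENNReal.ofReal_mul hC'0
          _ = ENNReal.ofReal (C + δ' / 2 ^ p * 2 ^ p + 1) * (‖F x‖₊ : ℝ≥0∞) ^ p := by
              rw [← enorm_eq_nnnorm, ← ofReal_norm,
                ENNReal.ofReal_rpow_of_nonneg (norm_nonneg _) hp.le]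
      · rw [lintegral_const_mul' _ _ ENNReal.ofReal_ne_top]
        exact ENNReal.mul_ne_top ENNReal.ofReal_ne_top (hFM.trans_lt hMtop.lt_top).ne
      · exact hh0
    obtain ⟨N₁, hN₁⟩ := eventually_atTop.mp hsub
    obtain ⟨N₂, hN₂⟩ := (ENNReal.tendsto_atTop_zero.mp hDCT) (ε / 2)
      (ENNReal.div_pos hε.ne' ENNReal.ofNat_ne_top)
    refine ⟨max N₁ N₂, fun n hn => ?_⟩
    have hn₁ := hN₁ n (le_trans (le_max_left _ _) hn)
    have hn₂ := hN₂ n (le_trans (le_max_right _ _) hn)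
    calc (∫⁻ x, ENNReal.ofReal (|‖f n x‖ ^ p - ‖f n x - F x‖ ^ p - ‖F x‖ ^ p|))
        ≤ ∫⁻ x, (ENNReal.ofReal (h n x)
            + ENNReal.ofReal (δ' / 2 ^ p * 2 ^ p) * (‖f n x - F x‖₊ : ℝ≥0∞) ^ p) := by
          apply lintegral_mono fun x => ?_
          calc ENNReal.ofReal (|‖f n x‖ ^ p - ‖f n x - F x‖ ^ p - ‖F x‖ ^ p|)
              ≤ ENNReal.ofReal (h n x + (δ' / 2 ^ p * 2 ^ p) * ‖f n x - F x‖ ^ p) :=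
                ENNReal.ofReal_le_ofReal (hh_G n x)
            _ = ENNReal.ofReal (h n x)
                + ENNReal.ofReal ((δ' / 2 ^ p * 2 ^ p) * ‖f n x - F x‖ ^ p) :=
                ENNReal.ofReal_add (hh_nonneg n x) (by positivity)
            _ = ENNReal.ofReal (h n x)
                + ENNReal.ofReal (δ' / 2 ^ p * 2 ^ p) * (‖f n x - F x‖₊ : ℝ≥0∞) ^ p := by
                rw [ENNReal.ofReal_mul (by positivity), ← enorm_eq_nnnorm, ← ofReal_norm,
                  ENNReal.ofReal_rpow_of_nonneg (norm_nonneg _) hp.le]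
      _ = (∫⁻ x, ENNReal.ofReal (h n x))
          + ENNReal.ofReal (δ' / 2 ^ p * 2 ^ p) * ∫⁻ x, (‖f n x - F x‖₊ : ℝ≥0∞) ^ p := by
          rw [lintegral_add_left' (hhmeas n), lintegral_const_mul' _ _ ENNReal.ofReal_ne_top]
      _ ≤ ε / 2 + ENNReal.ofReal δ' * M₂ := by
          rw [hδδ']
          exact add_le_add hn₂ (mul_le_mul_right hn₁ _)
      _ ≤ ε / 2 + ε / 2 := add_le_add_right hδ' _
      _ = ε := ENNReal.add_halves ε
  -- convert back to the Bochner integral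
  have hrepr : ∀ n, (∫ x : EuclideanSpace ℝ (Fin d),
      |‖f n x‖ ^ p - ‖f n x - F x‖ ^ p - ‖F x‖ ^ p|)
      = (∫⁻ x, ENNReal.ofReal (|‖f n x‖ ^ p - ‖f n x - F x‖ ^ p - ‖F x‖ ^ p|)).toReal :=
    fun n => integral_eq_lintegral_of_nonneg_ae (ae_of_all _ fun x => abs_nonneg _)
      (hGmeasR n).aestronglyMeasurable
  have hfin := (ENNReal.tendsto_toReal (by simp : (0:ℝ≥0∞) ≠ ⊤)).comp key
  simp only [ENNReal.toReal_zero] at hfin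
  rw [show (fun n => ∫ x : EuclideanSpace ℝ (Fin d),
      |‖f n x‖ ^ p - ‖f n x - F x‖ ^ p - ‖F x‖ ^ p|)
    = (fun n => (∫⁻ x, ENNReal.ofReal
        (|‖f n x‖ ^ p - ‖f n x - F x‖ ^ p - ‖F x‖ ^ p|)).toReal) from funext hrepr]
  exact hfin
end

section
/- Norm decoupling consequence of the Brezis–Lieb lemma: Let 0 < p < ∞ and let (f_n) be a sequence of measurable functions from ℝ^d to ℂ such that limsup_{n→∞} ∫_{ℝ^d} |f_n(x)|^p dx < ∞ and f_n → f almost everywhere on ℝ^d. Then ∫_{ℝ^d} |f_n(x)|^p dx − ∫_{ℝ^d} |f_n(x) − f(x)|^p dx → ∫_{ℝ^d} |f(x)|^p dx as n → ∞. -/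
open MeasureTheory Filter ENNReal


/-- For any `ε > 0` there is `C ≥ 0` with `(x+y)^p ≤ (1+ε) x^p + C y^p`. -/
lemma bl_key1 (p : ℝ) (hp : 0 < p) {ε : ℝ} (hε : 0 < ε) :
    ∃ C : ℝ, 0 ≤ C ∧ ∀ x y : ℝ, 0 ≤ x → 0 ≤ y →
      (x + y) ^ p ≤ (1 + ε) * x ^ p + C * y ^ p := by
  have h1 : Tendsto (fun t : ℝ => (1 + t⁻¹) ^ p) atTop (nhds 1) := by
    have h0 : Tendsto (fun t : ℝ => 1 + t⁻¹) atTop (nhds 1) := by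
      simpa using (tendsto_const_nhds (x := (1:ℝ))).add tendsto_inv_atTop_zero
    have := h0.rpow_const (p := p) (Or.inr hp.le)
    simpa using this
  have h2 : ∀ᶠ t : ℝ in atTop, (1 + t⁻¹) ^ p < 1 + ε :=
    h1.eventually_lt_const (by linarith)
  obtain ⟨R0, hR0⟩ := eventually_atTop.mp h2
  set R : ℝ := max R0 1 with hRdef
  have hR1 : (1:ℝ) ≤ R := le_max_right _ _
  have hR : ∀ t : ℝ, R ≤ t → (1 + t⁻¹) ^ p < 1 + ε := fun t ht =>
    hR0 t (le_trans (le_max_left _ _) ht)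
  refine ⟨(R + 1) ^ p, Real.rpow_nonneg (by linarith) p, ?_⟩
  intro x y hx hy
  rcases eq_or_lt_of_le hy with hy0 | hy0
  · rw [← hy0]
    have : (0:ℝ) ^ p = 0 := Real.zero_rpow hp.ne'
    rw [add_zero, this, mul_zero, add_zero]
    nlinarith [Real.rpow_nonneg hx p]
  · rcases le_or_gt x (R * y) with hxy | hxy
    · have hxylt : x + y ≤ (R + 1) * y := by nlinarith
      have := Real.rpow_le_rpow (by positivity) hxylt hp.le
      rw [Real.mul_rpow (by linarith) hy] at this
      nlinarith [Real.rpow_nonneg hx p]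
    · have hx0 : 0 < x := lt_of_le_of_lt (by positivity) hxy
      have hdiv : R ≤ x / y := (le_div_iff₀ hy0).mpr (by linarith)
      have hlt : (1 + (x / y)⁻¹) ^ p < 1 + ε := hR _ hdiv
      have hrw : x + y = x * (1 + (x / y)⁻¹) := by
        field_simp
      rw [hrw, Real.mul_rpow hx0.le (by positivity)]
      have h3 : x ^ p * (1 + (x / y)⁻¹) ^ p ≤ x ^ p * (1 + ε) :=
        mul_le_mul_of_nonneg_left hlt.le (Real.rpow_nonneg hx0.le p)
      nlinarith [Real.rpow_nonneg hy p, Real.rpow_nonneg (by linarith : (0:ℝ) ≤ R + 1) p]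

lemma bl_key2 (p : ℝ) (hp : 0 < p) {ε : ℝ} (hε : 0 < ε) :
    ∃ C : ℝ, 0 ≤ C ∧ ∀ a b : ℂ,
      |‖a + b‖ ^ p - ‖a‖ ^ p| ≤ ε * ‖a‖ ^ p + C * ‖b‖ ^ p := by
  set ε' : ℝ := min (ε / 2) (1 / 2) with hε'def
  have hε'pos : 0 < ε' := lt_min (by linarith) (by norm_num)
  have hε'le : ε' ≤ ε / 2 := min_le_left _ _
  have hε'le2 : ε' ≤ 1 / 2 := min_le_right _ _
  obtain ⟨C₁, hC₁0, hC₁⟩ := bl_key1 p hp hε'pos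
  refine ⟨2 * C₁, by linarith, ?_⟩
  intro a b
  have hna : (0:ℝ) ≤ ‖a‖ := norm_nonneg a
  have hnb : (0:ℝ) ≤ ‖b‖ := norm_nonneg b
  have hnab : (0:ℝ) ≤ ‖a + b‖ := norm_nonneg _
  have pa := Real.rpow_nonneg hna p
  have pb := Real.rpow_nonneg hnb p
  have pab := Real.rpow_nonneg hnab p
  -- upper bound
  have hup : ‖a + b‖ ^ p ≤ (1 + ε') * ‖a‖ ^ p + C₁ * ‖b‖ ^ p := by
    calc ‖a + b‖ ^ p ≤ (‖a‖ + ‖b‖) ^ p :=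
          Real.rpow_le_rpow hnab (norm_add_le a b) hp.le
      _ ≤ (1 + ε') * ‖a‖ ^ p + C₁ * ‖b‖ ^ p := hC₁ _ _ hna hnb
  -- lower bound
  have hlow : ‖a‖ ^ p ≤ (1 + ε') * ‖a + b‖ ^ p + C₁ * ‖b‖ ^ p := by
    have h : ‖a‖ ≤ ‖a + b‖ + ‖b‖ := by
      have := norm_add_le (a + b) (-b)
      simpa using this
    calc ‖a‖ ^ p ≤ (‖a + b‖ + ‖b‖) ^ p := Real.rpow_le_rpow hna h hp.le
      _ ≤ (1 + ε') * ‖a + b‖ ^ p + C₁ * ‖b‖ ^ p := hC₁ _ _ hnab hnb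
  rw [abs_sub_le_iff]
  constructor
  · nlinarith
  · nlinarith [mul_le_mul_of_nonneg_left hup hε'pos.le,
      mul_nonneg hε'pos.le pa, mul_nonneg hC₁0 pb]


variable {α : Type*} [MeasurableSpace α] {μ : Measure α}

lemma bl_ofReal (p : ℝ) (hp : 0 < p) (z : ℂ) :
    ENNReal.ofReal (‖z‖ ^ p) = (‖z‖₊ : ℝ≥0∞) ^ p := by
  rw [← ENNReal.ofReal_rpow_of_nonneg (norm_nonneg z) hp.le]
  exact congrArg (· ^ p) (ofReal_norm z)

lemma bl_aesm (p : ℝ) (hp : 0 < p) {g : α → ℂ} (hg : AEMeasurable g μ) :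
    AEStronglyMeasurable (fun x => ‖g x‖ ^ p) μ :=
  ((Real.continuous_rpow_const hp.le).measurable.comp_aemeasurable hg.norm).aestronglyMeasurable

lemma bl_integrable (p : ℝ) (hp : 0 < p) {g : α → ℂ} (hg : AEMeasurable g μ)
    (h : ∫⁻ x, (‖g x‖₊ : ℝ≥0∞) ^ p ∂μ ≠ ⊤) :
    Integrable (fun x => ‖g x‖ ^ p) μ := by
  refine ⟨bl_aesm p hp hg, ?_⟩
  rw [hasFiniteIntegral_iff_norm]
  have : ∀ x, ENNReal.ofReal ‖‖g x‖ ^ p‖ = (‖g x‖₊ : ℝ≥0∞) ^ p := by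
    intro x
    rw [Real.norm_eq_abs, abs_of_nonneg (Real.rpow_nonneg (norm_nonneg _) p),
      bl_ofReal p hp]
  rw [lintegral_congr this]
  exact h.lt_top

lemma bl_integral_eq (p : ℝ) (hp : 0 < p) {g : α → ℂ} (hg : AEMeasurable g μ) :
    ∫ x, ‖g x‖ ^ p ∂μ = (∫⁻ x, (‖g x‖₊ : ℝ≥0∞) ^ p ∂μ).toReal := by
  rw [integral_eq_lintegral_of_nonneg_ae
    (ae_of_all _ fun x => Real.rpow_nonneg (norm_nonneg _) p) (bl_aesm p hp hg)]
  congr 1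
  exact lintegral_congr fun x => bl_ofReal p hp (g x)

lemma bl_pointwise_ennreal (p : ℝ) (hp : 0 < p) (a b : ℂ) :
    (‖a - b‖₊ : ℝ≥0∞) ^ p ≤ 2 ^ p * ((‖a‖₊ : ℝ≥0∞) ^ p + (‖b‖₊ : ℝ≥0∞) ^ p) := by
  have h1 : (‖a - b‖₊ : ℝ≥0∞) ≤ 2 * max (‖a‖₊ : ℝ≥0∞) (‖b‖₊ : ℝ≥0∞) := by
    have := nnnorm_sub_le a b
    have h2 : (‖a - b‖₊ : ℝ≥0∞) ≤ (‖a‖₊ : ℝ≥0∞) + (‖b‖₊ : ℝ≥0∞) := by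
      exact_mod_cast this
    refine h2.trans ?_
    rw [two_mul]
    exact add_le_add (le_max_left _ _) (le_max_right _ _)
  calc (‖a - b‖₊ : ℝ≥0∞) ^ p ≤ (2 * max (‖a‖₊ : ℝ≥0∞) (‖b‖₊ : ℝ≥0∞)) ^ p :=
        ENNReal.rpow_le_rpow h1 hp.le
    _ = 2 ^ p * (max (‖a‖₊ : ℝ≥0∞) (‖b‖₊ : ℝ≥0∞)) ^ p :=
        ENNReal.mul_rpow_of_nonneg _ _ hp.le
    _ ≤ 2 ^ p * ((‖a‖₊ : ℝ≥0∞) ^ p + (‖b‖₊ : ℝ≥0∞) ^ p) := by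
        gcongr
        rcases max_cases (‖a‖₊ : ℝ≥0∞) (‖b‖₊ : ℝ≥0∞) with ⟨h, _⟩ | ⟨h, _⟩ <;> rw [h]
        · exact le_add_right le_rfl
        · exact le_add_left le_rfl

/-- **Norm decoupling consequence of the Brezis–Lieb lemma**: if `0 < p < ∞`, the `L^p`
masses of the `f n` stay bounded (their `limsup` is finite), and `f n → f` almost
everywhere on `ℝ^d`, then `∫ |f n|^p − ∫ |f n − f|^p → ∫ |f|^p`. -/
theorem brezis_lieb_norm_decoupling
    (d : ℕ) (p : ℝ) (hp : 0 < p)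
    (f : ℕ → EuclideanSpace ℝ (Fin d) → ℂ) (F : EuclideanSpace ℝ (Fin d) → ℂ)
    (hmeas : ∀ n, Measurable (f n))
    (hbdd : Filter.limsup (fun n => ∫⁻ x, (‖f n x‖₊ : ℝ≥0∞) ^ p) Filter.atTop < ⊤)
    (hae : ∀ᵐ x : EuclideanSpace ℝ (Fin d), Tendsto (fun n => f n x) atTop (nhds (F x))) :
    Tendsto (fun n => (∫ x : EuclideanSpace ℝ (Fin d), ‖f n x‖ ^ p)
        - ∫ x : EuclideanSpace ℝ (Fin d), ‖f n x - F x‖ ^ p) atTop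
      (nhds (∫ x : EuclideanSpace ℝ (Fin d), ‖F x‖ ^ p)) := by
  -- measurability of F
  have hF_meas : AEMeasurable F (volume : Measure (EuclideanSpace ℝ (Fin d))) :=
    aemeasurable_of_tendsto_metrizable_ae atTop (fun n => (hmeas n).aemeasurable) hae
  -- measurability of the lintegrands
  have hΦmeas : ∀ n, Measurable (fun x : EuclideanSpace ℝ (Fin d) => (‖f n x‖₊ : ℝ≥0∞) ^ p) := fun n =>
    ENNReal.continuous_rpow_const.measurable.comp (hmeas n).nnnorm.coe_nnreal_ennreal
  -- Fatou: the limit has finite p-mass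
  have hFatou : ∫⁻ x : EuclideanSpace ℝ (Fin d), (‖F x‖₊ : ℝ≥0∞) ^ p ≤
      Filter.limsup (fun n => ∫⁻ x : EuclideanSpace ℝ (Fin d), (‖f n x‖₊ : ℝ≥0∞) ^ p) Filter.atTop := by
    have h1 : ∫⁻ x : EuclideanSpace ℝ (Fin d), (‖F x‖₊ : ℝ≥0∞) ^ p =
        ∫⁻ x : EuclideanSpace ℝ (Fin d), Filter.liminf (fun n => (‖f n x‖₊ : ℝ≥0∞) ^ p) atTop := by
      refine lintegral_congr_ae (hae.mono fun x hx => ?_)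
      have : Tendsto (fun n => (‖f n x‖₊ : ℝ≥0∞) ^ p) atTop
          (nhds ((‖F x‖₊ : ℝ≥0∞) ^ p)) := by
        apply (ENNReal.continuous_rpow_const.tendsto _).comp
        exact (ENNReal.continuous_coe.tendsto _).comp ((continuous_nnnorm.tendsto _).comp hx)
      exact this.liminf_eq.symm
    rw [h1]
    exact le_trans (lintegral_liminf_le hΦmeas) liminf_le_limsup
  have hFlt : ∫⁻ x : EuclideanSpace ℝ (Fin d), (‖F x‖₊ : ℝ≥0∞) ^ p ≠ ⊤ := (hFatou.trans_lt hbdd).ne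
  -- uniform eventual bound on the masses
  set K : ℝ≥0∞ := Filter.limsup (fun n => ∫⁻ x : EuclideanSpace ℝ (Fin d), (‖f n x‖₊ : ℝ≥0∞) ^ p) Filter.atTop + 1
    with hKdef
  have hKne : K ≠ ⊤ := ENNReal.add_ne_top.mpr ⟨hbdd.ne, one_ne_top⟩
  have hKev : ∀ᶠ n in atTop, ∫⁻ x : EuclideanSpace ℝ (Fin d), (‖f n x‖₊ : ℝ≥0∞) ^ p < K :=
    eventually_lt_of_limsup_lt (ENNReal.lt_add_right hbdd.ne one_ne_zero)
  -- bound on the differences' masses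
  set Ktot : ℝ≥0∞ := 2 ^ p * (K + ∫⁻ x : EuclideanSpace ℝ (Fin d), (‖F x‖₊ : ℝ≥0∞) ^ p) with hKtotdef
  have hKtotne : Ktot ≠ ⊤ := by
    apply ENNReal.mul_ne_top
    · exact (ENNReal.rpow_lt_top_of_nonneg hp.le ENNReal.ofNat_ne_top).ne
    · exact ENNReal.add_ne_top.mpr ⟨hKne, hFlt⟩
  have hBmass : ∀ n, ∫⁻ x : EuclideanSpace ℝ (Fin d), (‖f n x‖₊ : ℝ≥0∞) ^ p < K →
      ∫⁻ x : EuclideanSpace ℝ (Fin d), (‖f n x - F x‖₊ : ℝ≥0∞) ^ p ≤ Ktot := by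
    intro n hn
    calc ∫⁻ x : EuclideanSpace ℝ (Fin d), (‖f n x - F x‖₊ : ℝ≥0∞) ^ p
        ≤ ∫⁻ x : EuclideanSpace ℝ (Fin d), 2 ^ p * ((‖f n x‖₊ : ℝ≥0∞) ^ p + (‖F x‖₊ : ℝ≥0∞) ^ p) :=
          lintegral_mono fun x => bl_pointwise_ennreal p hp _ _
      _ = 2 ^ p * ∫⁻ x : EuclideanSpace ℝ (Fin d), ((‖f n x‖₊ : ℝ≥0∞) ^ p + (‖F x‖₊ : ℝ≥0∞) ^ p) :=
          lintegral_const_mul' _ _ (ENNReal.rpow_lt_top_of_nonneg hp.le ENNReal.ofNat_ne_top).ne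
      _ = 2 ^ p * ((∫⁻ x : EuclideanSpace ℝ (Fin d), (‖f n x‖₊ : ℝ≥0∞) ^ p) + ∫⁻ x : EuclideanSpace ℝ (Fin d), (‖F x‖₊ : ℝ≥0∞) ^ p) := by
          rw [lintegral_add_left (hΦmeas n)]
      _ ≤ Ktot := by
          rw [hKtotdef]
          gcongr
  set M : ℝ := Ktot.toReal with hMdef
  have hM0 : 0 ≤ M := ENNReal.toReal_nonneg
  -- integrability of |F|^p
  have I_F : Integrable (fun x : EuclideanSpace ℝ (Fin d) => ‖F x‖ ^ p) := bl_integrable p hp hF_meas hFlt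
  set L : ℝ := ∫ x : EuclideanSpace ℝ (Fin d), ‖F x‖ ^ p with hLdef
  -- it suffices to show the difference tends to 0
  suffices h : Tendsto (fun n => ((∫ x : EuclideanSpace ℝ (Fin d), ‖f n x‖ ^ p) - ∫ x : EuclideanSpace ℝ (Fin d), ‖f n x - F x‖ ^ p) - L)
      atTop (nhds 0) by
    have := h.add_const L
    simpa using this
  rw [NormedAddCommGroup.tendsto_nhds_zero]
  intro δ hδ
  set ε₀ : ℝ := δ / (2 * (M + 1)) with hε₀def
  have hε₀pos : 0 < ε₀ := by positivity
  obtain ⟨C, hC0, hC⟩ := bl_key2 p hp hε₀pos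
  -- the Brezis–Lieb auxiliary function
  set W : ℕ → EuclideanSpace ℝ (Fin d) → ℝ := fun n x =>
    max (|‖f n x‖ ^ p - ‖f n x - F x‖ ^ p - ‖F x‖ ^ p| - ε₀ * ‖f n x - F x‖ ^ p) 0
    with hWdef
  have hsub_meas : ∀ n, AEMeasurable (fun x : EuclideanSpace ℝ (Fin d) => f n x - F x) (volume : Measure (EuclideanSpace ℝ (Fin d))) :=
    fun n => (hmeas n).aemeasurable.sub hF_meas
  have hW_aesm : ∀ n, AEStronglyMeasurable (W n) (volume : Measure (EuclideanSpace ℝ (Fin d))) := by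
    intro n
    apply AEMeasurable.aestronglyMeasurable
    have m1 : AEMeasurable (fun x : EuclideanSpace ℝ (Fin d) => ‖f n x‖ ^ p) (volume : Measure (EuclideanSpace ℝ (Fin d))) :=
      (bl_aesm p hp (hmeas n).aemeasurable).aemeasurable
    have m2 : AEMeasurable (fun x : EuclideanSpace ℝ (Fin d) => ‖f n x - F x‖ ^ p) (volume : Measure (EuclideanSpace ℝ (Fin d))) :=
      (bl_aesm p hp (hsub_meas n)).aemeasurable
    have m3 : AEMeasurable (fun x : EuclideanSpace ℝ (Fin d) => ‖F x‖ ^ p) (volume : Measure (EuclideanSpace ℝ (Fin d))) :=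
      (bl_aesm p hp hF_meas).aemeasurable
    exact (((continuous_abs.measurable.comp_aemeasurable ((m1.sub m2).sub m3))).sub (m2.const_mul ε₀)).max aemeasurable_const
  -- pointwise domination of W
  have hWbound : ∀ n, ∀ x : EuclideanSpace ℝ (Fin d), ‖W n x‖ ≤ (C + 1) * ‖F x‖ ^ p := by
    intro n x
    have key := hC (f n x - F x) (F x)
    rw [sub_add_cancel] at key
    have hFp : 0 ≤ ‖F x‖ ^ p := Real.rpow_nonneg (norm_nonneg _) p
    have habs : |‖f n x‖ ^ p - ‖f n x - F x‖ ^ p - ‖F x‖ ^ p| ≤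
        |‖f n x‖ ^ p - ‖f n x - F x‖ ^ p| + ‖F x‖ ^ p := by
      calc |‖f n x‖ ^ p - ‖f n x - F x‖ ^ p - ‖F x‖ ^ p| ≤
          |‖f n x‖ ^ p - ‖f n x - F x‖ ^ p| + |‖F x‖ ^ p| := abs_sub _ _
        _ = |‖f n x‖ ^ p - ‖f n x - F x‖ ^ p| + ‖F x‖ ^ p := by rw [abs_of_nonneg hFp]
    have hWnn : 0 ≤ W n x := le_max_right _ _
    rw [Real.norm_eq_abs, abs_of_nonneg hWnn, hWdef]
    simp only [max_le_iff]
    constructor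
    · nlinarith
    · positivity
  -- DCT : ∫ W n → 0
  have hWto0 : Tendsto (fun n => ∫ x : EuclideanSpace ℝ (Fin d), W n x) atTop (nhds 0) := by
    have h0 : (0:ℝ) = ∫ _x : EuclideanSpace ℝ (Fin d), (0:ℝ) := by simp
    rw [h0]
    apply tendsto_integral_of_dominated_convergence (fun x => (C + 1) * ‖F x‖ ^ p)
      hW_aesm (I_F.const_mul (C + 1))
    · intro n
      exact ae_of_all _ (hWbound n)
    · refine hae.mono fun x hx => ?_
      have hb : Tendsto (fun n => ‖f n x - F x‖ ^ p) atTop (nhds 0) := by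
        have h1 : Tendsto (fun n => f n x - F x) atTop (nhds 0) := by
          simpa using hx.sub (tendsto_const_nhds (x := F x))
        have h2 : Tendsto (fun n => ‖f n x - F x‖) atTop (nhds 0) := by
          simpa using h1.norm
        have h3 := ((Real.continuous_rpow_const hp.le).tendsto 0).comp h2
        simpa [Function.comp_def, Real.zero_rpow hp.ne'] using h3
      have ha : Tendsto (fun n => ‖f n x‖ ^ p) atTop (nhds (‖F x‖ ^ p)) :=
        ((Real.continuous_rpow_const hp.le).tendsto _).comp hx.norm
      have := ((((ha.sub hb).sub (tendsto_const_nhds (x := ‖F x‖ ^ p))).abs.sub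
        (hb.const_mul ε₀)).max (tendsto_const_nhds (x := (0:ℝ))))
      simpa using this
  -- eventual bound on ∫ W n
  have hWev : ∀ᶠ n in atTop, ∫ x : EuclideanSpace ℝ (Fin d), W n x < δ / 2 := by
    have := hWto0.eventually_lt_const (by linarith : (0:ℝ) < δ / 2)
    exact this
  filter_upwards [hKev, hWev] with n hnK hnW
  -- integrability of everything for this n
  have I_A : Integrable (fun x : EuclideanSpace ℝ (Fin d) => ‖f n x‖ ^ p) :=
    bl_integrable p hp (hmeas n).aemeasurable (hnK.trans hKne.lt_top).ne
  have I_B : Integrable (fun x : EuclideanSpace ℝ (Fin d) => ‖f n x - F x‖ ^ p) :=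
    bl_integrable p hp (hsub_meas n) ((hBmass n hnK).trans_lt hKtotne.lt_top).ne
  have I_W : Integrable (W n) :=
    Integrable.mono' (I_F.const_mul (C + 1)) (hW_aesm n) (ae_of_all _ (hWbound n))
  -- the difference equals an integral
  have e1 : (∫ x : EuclideanSpace ℝ (Fin d), (‖f n x‖ ^ p - ‖f n x - F x‖ ^ p - ‖F x‖ ^ p)) =
      (∫ x : EuclideanSpace ℝ (Fin d), (‖f n x‖ ^ p - ‖f n x - F x‖ ^ p)) -
        ∫ x : EuclideanSpace ℝ (Fin d), ‖F x‖ ^ p := integral_sub (I_A.sub I_B) I_F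
  have e2 : (∫ x : EuclideanSpace ℝ (Fin d), (‖f n x‖ ^ p - ‖f n x - F x‖ ^ p)) =
      (∫ x : EuclideanSpace ℝ (Fin d), ‖f n x‖ ^ p) -
        ∫ x : EuclideanSpace ℝ (Fin d), ‖f n x - F x‖ ^ p := integral_sub I_A I_B
  have heq : ((∫ x : EuclideanSpace ℝ (Fin d), ‖f n x‖ ^ p) - ∫ x : EuclideanSpace ℝ (Fin d), ‖f n x - F x‖ ^ p) - L =
      ∫ x : EuclideanSpace ℝ (Fin d), (‖f n x‖ ^ p - ‖f n x - F x‖ ^ p - ‖F x‖ ^ p) := by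
    rw [e1, e2]
  -- bound on ∫ B n
  have hBle : ∫ x : EuclideanSpace ℝ (Fin d), ‖f n x - F x‖ ^ p ≤ M := by
    rw [bl_integral_eq p hp (hsub_meas n)]
    exact ENNReal.toReal_mono hKtotne (hBmass n hnK)
  have hBnn : 0 ≤ ∫ x : EuclideanSpace ℝ (Fin d), ‖f n x - F x‖ ^ p :=
    integral_nonneg fun x => Real.rpow_nonneg (norm_nonneg _) p
  -- final estimate
  rw [heq, Real.norm_eq_abs]
  have h1 : |∫ x : EuclideanSpace ℝ (Fin d), (‖f n x‖ ^ p - ‖f n x - F x‖ ^ p - ‖F x‖ ^ p)| ≤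
      ∫ x : EuclideanSpace ℝ (Fin d), |‖f n x‖ ^ p - ‖f n x - F x‖ ^ p - ‖F x‖ ^ p| := by
    simpa [Real.norm_eq_abs] using
      norm_integral_le_integral_norm (fun x : EuclideanSpace ℝ (Fin d) => ‖f n x‖ ^ p - ‖f n x - F x‖ ^ p - ‖F x‖ ^ p)
  have h2 : ∫ x : EuclideanSpace ℝ (Fin d), |‖f n x‖ ^ p - ‖f n x - F x‖ ^ p - ‖F x‖ ^ p| ≤
      ∫ x : EuclideanSpace ℝ (Fin d), (W n x + ε₀ * ‖f n x - F x‖ ^ p) := by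
    apply integral_mono ((I_A.sub I_B).sub I_F).abs (I_W.add (I_B.const_mul ε₀))
    intro x
    have : |‖f n x‖ ^ p - ‖f n x - F x‖ ^ p - ‖F x‖ ^ p| - ε₀ * ‖f n x - F x‖ ^ p ≤ W n x :=
      le_max_left _ _
    simp only [Pi.add_apply, Pi.sub_apply]
    linarith
  have h3 : ∫ x : EuclideanSpace ℝ (Fin d), (W n x + ε₀ * ‖f n x - F x‖ ^ p) =
      (∫ x : EuclideanSpace ℝ (Fin d), W n x) + ε₀ * ∫ x : EuclideanSpace ℝ (Fin d), ‖f n x - F x‖ ^ p := by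
    rw [integral_add I_W (I_B.const_mul ε₀), integral_const_mul]
  have h4 : ε₀ * ∫ x : EuclideanSpace ℝ (Fin d), ‖f n x - F x‖ ^ p ≤ ε₀ * M :=
    mul_le_mul_of_nonneg_left hBle hε₀pos.le
  have h5 : ε₀ * M < δ / 2 := by
    rw [hε₀def, div_mul_eq_mul_div, div_lt_div_iff₀ (by linarith) two_pos]
    nlinarith
  calc |∫ x : EuclideanSpace ℝ (Fin d), (‖f n x‖ ^ p - ‖f n x - F x‖ ^ p - ‖F x‖ ^ p)|
      ≤ (∫ x : EuclideanSpace ℝ (Fin d), W n x) + ε₀ * ∫ x : EuclideanSpace ℝ (Fin d), ‖f n x - F x‖ ^ p := by rw [← h3]; exact h1.trans h2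
    _ < δ / 2 + δ / 2 := by
        apply add_lt_add_of_lt_of_le hnW
        exact h4.trans h5.le
    _ = δ := by ring
end

section
/- Pohozaev identities: Let Q : ℝ³ → ℝ be a Schwartz function satisfying ΔQ(x) + Q(x)³ = Q(x) for every x ∈ ℝ³, where ΔQ = ∑_{j=1}^3 ∂²Q/∂x_j². Then ∫_{ℝ³} Q(x)² dx = (1/4) ∫_{ℝ³} Q(x)⁴ dx and ∫_{ℝ³} Q(x)² dx = (1/3) ∫_{ℝ³} ‖∇Q(x)‖² dx. -/
open MeasureTheory SchwartzMap

/-- The Laplacian of a real-valued function on `ℝ³`: the sum of the pure second partial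
derivatives. -/
noncomputable def laplacianR3 (f : EuclideanSpace ℝ (Fin 3) → ℝ)
    (x : EuclideanSpace ℝ (Fin 3)) : ℝ :=
  ∑ j : Fin 3,
    fderiv ℝ (fun y => fderiv ℝ f y (EuclideanSpace.single j 1)) x (EuclideanSpace.single j 1)

namespace PohozaevAux

noncomputable section

abbrev E3 := EuclideanSpace ℝ (Fin 3)

abbrev e3 (j : Fin 3) : E3 := EuclideanSpace.single j (1:ℝ)

lemma schwartz_tempGrowth (f : 𝓢(E3, ℝ)) : Function.HasTemperateGrowth ⇑f := by
  refine ⟨f.smooth ⊤, fun n => ⟨0, SchwartzMap.seminorm ℝ 0 n f, fun x => ?_⟩⟩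
  simpa using SchwartzMap.norm_iteratedFDeriv_le_seminorm ℝ f n x

/-- product of two Schwartz functions -/
def mulS (f g : 𝓢(E3, ℝ)) : 𝓢(E3, ℝ) :=
  bilinLeftCLM (ContinuousLinearMap.mul ℝ ℝ) (schwartz_tempGrowth g) f

@[simp] lemma mulS_apply (f g : 𝓢(E3, ℝ)) (x : E3) : mulS f g x = f x * g x := rfl

/-- multiplication by the coordinate x j -/
def coordS (j : Fin 3) (f : 𝓢(E3, ℝ)) : 𝓢(E3, ℝ) :=
  bilinLeftCLM (ContinuousLinearMap.mul ℝ ℝ)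
    ((innerSL ℝ (e3 j)).hasTemperateGrowth) f

@[simp] lemma coordS_apply (j : Fin 3) (f : 𝓢(E3, ℝ)) (x : E3) :
    coordS j f x = f x * x j := by
  have : innerSL ℝ (e3 j) x = x j := by
    simp [EuclideanSpace.inner_single_left]
  exact congrArg (f x * ·) this

lemma coordS_coe (j : Fin 3) (f : 𝓢(E3, ℝ)) : ⇑(coordS j f) = fun x => f x * x j :=
  funext (coordS_apply j f)

/-- partial derivative in direction j -/
def pd (j : Fin 3) (f : 𝓢(E3, ℝ)) : 𝓢(E3, ℝ) := LineDeriv.lineDerivOp (e3 j) f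

@[simp] lemma pd_apply (j : Fin 3) (f : 𝓢(E3, ℝ)) (x : E3) :
    pd j f x = fderiv ℝ (⇑f) x (e3 j) := rfl

/-- The key lemma: the integral of a directional derivative of a Schwartz function vanishes. -/
lemma integral_fderiv_schwartz (f : 𝓢(E3, ℝ)) (v : E3) :
    ∫ x : E3, fderiv ℝ (⇑f) x v = 0 := by
  set g : E3 → ℂ := fun x => (f x : ℂ) with hg
  have hdg : ∀ x, HasFDerivAt g (Complex.ofRealCLM.comp (fderiv ℝ (⇑f) x)) x := fun x =>
    (Complex.ofRealCLM.hasFDerivAt).comp x (f.differentiableAt.hasFDerivAt)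
  have hfdg : fderiv ℝ g = fun x => Complex.ofRealCLM.comp (fderiv ℝ (⇑f) x) :=
    funext fun x => (hdg x).fderiv
  have hgint : Integrable g := (f.integrable).ofReal
  have hgdiff : Differentiable ℝ g := fun x => (hdg x).differentiableAt
  have hfint : Integrable (fun x => fderiv ℝ (⇑f) x) := by
    have := (SchwartzMap.fderivCLM ℝ E3 ℝ f).integrable (μ := volume)
    exact this
  have hgdint : Integrable (fderiv ℝ g) := by
    rw [hfdg]
    exact (ContinuousLinearMap.compL ℝ E3 ℝ ℂ Complex.ofRealCLM).integrable_comp hfint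
  have key := Real.fourier_fderiv hgint hgdiff hgdint
  have h0 : (∫ x : E3, fderiv ℝ g x) = 0 := by
    have h := congrFun key 0
    rw [Real.fourier_eq] at h
    simp only [inner_zero_right, neg_zero] at h
    simp only [VectorFourier.fourierSMulRight] at h
    have hz : -((2 * (Real.pi:ℂ) * Complex.I) •
        ContinuousLinearMap.smulRight (0 : E3 →L[ℝ] ℝ) (FourierTransform.fourier g 0)) = 0 := by
      ext w; simp
    simpa [hz] using h
  have hiv : Integrable (fun x : E3 => fderiv ℝ (⇑f) x v) := by
    exact (LineDeriv.lineDerivOp v f).integrable (μ := volume)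
  have h2 : (∫ x : E3, ((fderiv ℝ (⇑f) x v : ℝ) : ℂ)) = 0 := by
    have e1 : (∫ x : E3, ((fderiv ℝ (⇑f) x v : ℝ) : ℂ)) = ∫ x : E3, fderiv ℝ g x v := by
      refine integral_congr_ae (Filter.Eventually.of_forall fun x => ?_)
      rw [hfdg]; simp
    rw [e1, ← ContinuousLinearMap.integral_apply hgdint v, h0]
    rfl
  have h4 : ∫ x : E3, Complex.reCLM ((fderiv ℝ (⇑f) x v : ℝ) : ℂ)
      = Complex.reCLM (∫ x : E3, ((fderiv ℝ (⇑f) x v : ℝ) : ℂ)) :=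
    ContinuousLinearMap.integral_comp_comm _ (hiv.ofReal (𝕜 := ℂ))
  rw [h2] at h4
  simpa using h4

/-- wrapper: if `F` is the directional derivative of a Schwartz map, its integral is zero. -/
lemma int_pd_zero (f : 𝓢(E3, ℝ)) (j : Fin 3) (F : E3 → ℝ)
    (hF : ∀ x, fderiv ℝ (⇑f) x (e3 j) = F x) : ∫ x : E3, F x = 0 := by
  rw [show F = fun x => fderiv ℝ (⇑f) x (e3 j) from funext fun x => (hF x).symm]
  exact integral_fderiv_schwartz f (e3 j)

lemma intS (f g : 𝓢(E3, ℝ)) : Integrable (fun x : E3 => f x * g x) :=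
  (mulS f g).integrable

lemma intS3 (j : Fin 3) (f : 𝓢(E3, ℝ)) : Integrable (fun x : E3 => f x * x j) :=
  (coordS_coe j f) ▸ (coordS j f).integrable

/-- product rule, pointwise -/
lemma fderiv_mulS (f g : 𝓢(E3, ℝ)) (x v : E3) :
    fderiv ℝ (fun y => f y * g y) x v = fderiv ℝ (⇑f) x v * g x + f x * fderiv ℝ (⇑g) x v := by
  rw [fderiv_fun_mul f.differentiableAt g.differentiableAt]
  simp only [ContinuousLinearMap.add_apply, ContinuousLinearMap.smul_apply, smul_eq_mul]
  ring

lemma coord_diffAt (j : Fin 3) (x : E3) : DifferentiableAt ℝ (fun y : E3 => y j) x := by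
  have : (fun y : E3 => y j) = fun y => (EuclideanSpace.proj (𝕜 := ℝ) j) y := by
    funext y; simp
  rw [this]
  exact (EuclideanSpace.proj (𝕜 := ℝ) j).differentiableAt

lemma fderiv_coord (j : Fin 3) (x v : E3) : fderiv ℝ (fun y : E3 => y j) x v = v j := by
  have : (fun y : E3 => y j) = fun y => (EuclideanSpace.proj (𝕜 := ℝ) j) y := by
    funext y; simp
  rw [this, ContinuousLinearMap.fderiv]
  simp

lemma fderiv_coord_mul (f : 𝓢(E3, ℝ)) (j : Fin 3) (x v : E3) :
    fderiv ℝ (fun y => f y * y j) x v = fderiv ℝ (⇑f) x v * x j + f x * v j := by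
  rw [fderiv_fun_mul (𝕜 := ℝ) f.differentiableAt (coord_diffAt j x)]
  simp only [ContinuousLinearMap.add_apply, ContinuousLinearMap.smul_apply, smul_eq_mul,
    fderiv_coord]
  ring

/-- single coordinate of a basis vector -/
lemma e3_apply (j k : Fin 3) : (e3 j) k = if j = k then (1:ℝ) else 0 := by
  simp [e3, EuclideanSpace.single_apply, eq_comm]

/-- symmetry of second derivatives of Schwartz maps -/
lemma pd_comm (f : 𝓢(E3, ℝ)) (j k : Fin 3) (x : E3) :
    pd k (pd j f) x = pd j (pd k f) x := by
  have hsm : ContDiff ℝ 2 (⇑f) := f.smooth 2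
  have hdd : Differentiable ℝ (fderiv ℝ (⇑f)) := by
    have : ContDiff ℝ 1 (fderiv ℝ (⇑f)) := (hsm.fderiv_right (le_refl _))
    exact this.differentiable (by norm_num)
  have hrep : ∀ (v w : E3) (x : E3), fderiv ℝ (fun y => fderiv ℝ (⇑f) y v) x w
      = fderiv ℝ (fderiv ℝ (⇑f)) x w v := by
    intro v w x
    have h := ((ContinuousLinearMap.apply ℝ ℝ v).hasFDerivAt.comp x (hdd x).hasFDerivAt).fderiv
    have heq : (⇑(ContinuousLinearMap.apply ℝ ℝ v) ∘ fderiv ℝ (⇑f))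
        = fun y => fderiv ℝ (⇑f) y v := rfl
    rw [heq] at h
    rw [h]
    rfl
  have hsymm := (hsm.contDiffAt (x := x)).isSymmSndFDerivAt (n := 2) (by simp)
  have h1 : pd k (pd j f) x = fderiv ℝ (fderiv ℝ (⇑f)) x (e3 k) (e3 j) := by
    have hc : ⇑(pd j f) = fun y => fderiv ℝ (⇑f) y (e3 j) := rfl
    rw [pd_apply, hc]
    exact hrep (e3 j) (e3 k) x
  have h2 : pd j (pd k f) x = fderiv ℝ (fderiv ℝ (⇑f)) x (e3 j) (e3 k) := by
    have hc : ⇑(pd k f) = fun y => fderiv ℝ (⇑f) y (e3 k) := rfl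
    rw [pd_apply, hc]
    exact hrep (e3 k) (e3 j) x
  rw [h1, h2, hsymm (e3 k) (e3 j)]

/-- basic product-rule for `pd` -/
lemma pd_mulS (f g : 𝓢(E3, ℝ)) (j : Fin 3) (x : E3) :
    pd j (mulS f g) x = pd j f x * g x + f x * pd j g x := by
  have hc : ⇑(mulS f g) = fun y => f y * g y := rfl
  rw [pd_apply, hc, fderiv_mulS]
  rfl

lemma pd_coordS (f : 𝓢(E3, ℝ)) (i j : Fin 3) (x : E3) :
    pd j (coordS i f) x = pd j f x * x i + (if j = i then f x else 0) := by
  rw [pd_apply, coordS_coe, fderiv_coord_mul, e3_apply]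
  by_cases h : j = i <;> simp [h, pd_apply]

/-- weighted integration by parts: `∫ ∂ⱼh · xⱼ = -∫ h`. -/
lemma int_coord_pd (h : 𝓢(E3, ℝ)) (j : Fin 3) :
    ∫ x : E3, pd j h x * x j = - ∫ x : E3, h x := by
  have h0 := int_pd_zero (coordS j h) j (fun x => pd j h x * x j + h x) (fun x => by
    rw [← pd_apply, pd_coordS, if_pos rfl])
  rw [integral_add (intS3 j (pd j h)) h.integrable] at h0
  linarith

lemma norm_gradient_sq (f : 𝓢(E3, ℝ)) (x : E3) :
    ‖gradient (⇑f) x‖ ^ 2 = ∑ k : Fin 3, pd k f x * pd k f x := by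
  have hcoord : ∀ k : Fin 3, gradient (⇑f) x k = pd k f x := by
    intro k
    have h1 : (inner ℝ (gradient (⇑f) x) (e3 k) : ℝ) = fderiv ℝ (⇑f) x (e3 k) := by
      rw [gradient]
      exact InnerProductSpace.toDual_symm_apply
    have h2 : (inner ℝ (gradient (⇑f) x) (e3 k) : ℝ) = gradient (⇑f) x k := by
      rw [real_inner_comm]
      simp only [e3, EuclideanSpace.inner_single_left]
      simp
    rw [pd_apply, ← h1, h2]
  calc ‖gradient (⇑f) x‖ ^ 2 = ∑ k : Fin 3, ‖gradient (⇑f) x k‖ ^ 2 := by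
        rw [EuclideanSpace.norm_eq, Real.sq_sqrt (by positivity)]
    _ = ∑ k : Fin 3, pd k f x * pd k f x := by
        refine Finset.sum_congr rfl fun k _ => ?_
        rw [hcoord k, Real.norm_eq_abs, sq_abs, sq]

end

end PohozaevAux

open PohozaevAux

/-- **Pohozaev identities**: if `Q` is a real-valued Schwartz function on `ℝ³` solving
`ΔQ + Q³ = Q`, then `∫ Q² = (1/4) ∫ Q⁴` and `∫ Q² = (1/3) ∫ ‖∇Q‖²`. -/
theorem pohozaev_identities
    (Q : SchwartzMap (EuclideanSpace ℝ (Fin 3)) ℝ)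
    (hQ : ∀ x : EuclideanSpace ℝ (Fin 3), laplacianR3 (⇑Q) x + (Q x) ^ 3 = Q x) :
    (∫ x : EuclideanSpace ℝ (Fin 3), (Q x) ^ 2)
      = (1/4) * (∫ x : EuclideanSpace ℝ (Fin 3), (Q x) ^ 4)
    ∧ (∫ x : EuclideanSpace ℝ (Fin 3), (Q x) ^ 2)
      = (1/3) * ∫ x : EuclideanSpace ℝ (Fin 3), ‖gradient (⇑Q) x‖ ^ 2 := by
  classical
  have hLap : ∀ x : E3, (∑ k : Fin 3, pd k (pd k Q) x) = Q x - Q x ^ 3 := by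
    intro x
    have h := hQ x
    have hl : laplacianR3 (⇑Q) x = ∑ k : Fin 3, pd k (pd k Q) x := rfl
    rw [hl] at h
    linarith
  have hq2 : Integrable (fun x : E3 => Q x * Q x) := intS Q Q
  have hq4 : Integrable (fun x : E3 => Q x * Q x * (Q x * Q x)) := intS (mulS Q Q) (mulS Q Q)
  have hci : ∀ j k : Fin 3, Integrable (fun x : E3 => pd j Q x * x j * pd k (pd k Q) x) := by
    intro j k
    refine ((mulS (coordS j (pd j Q)) (pd k (pd k Q))).integrable).congr
      (Filter.Eventually.of_forall fun x => ?_)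
    rw [mulS_apply, coordS_apply]
  have intS3' : ∀ (f g : 𝓢(E3, ℝ)) (j : Fin 3),
      Integrable (fun x : E3 => f x * g x * x j) := fun f g j => intS3 j (mulS f g)
  -- (1)  ∫ Q ∂ₖ∂ₖQ = -∫ (∂ₖQ)²
  have h1 : ∀ k : Fin 3, (∫ x : E3, Q x * pd k (pd k Q) x)
      = - ∫ x : E3, pd k Q x * pd k Q x := by
    intro k
    have h0 := int_pd_zero (mulS Q (pd k Q)) k
      (fun x => pd k Q x * pd k Q x + Q x * pd k (pd k Q) x)
      (fun x => by rw [← pd_apply, pd_mulS])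
    rw [integral_add (intS (pd k Q) (pd k Q)) (intS Q (pd k (pd k Q)))] at h0
    linarith
  -- (2)
  have h2 : (∫ x : E3, Q x * Q x) - (∫ x : E3, Q x * Q x * (Q x * Q x))
      = ∑ k : Fin 3, ∫ x : E3, Q x * pd k (pd k Q) x := by
    rw [← integral_sub hq2 hq4, ← integral_finset_sum _ (fun k _ => intS Q (pd k (pd k Q)))]
    refine integral_congr_ae (Filter.Eventually.of_forall fun x => ?_)
    simp only [← Finset.mul_sum, hLap x]
    ring
  -- (3)
  have h3 : ∀ j : Fin 3, 2 * (∫ x : E3, Q x * pd j Q x * x j) = - ∫ x : E3, Q x * Q x := by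
    intro j
    have h0 := int_coord_pd (mulS Q Q) j
    have e1 : (fun x : E3 => pd j (mulS Q Q) x * x j)
        = fun x => 2 * (Q x * pd j Q x * x j) := funext fun x => by rw [pd_mulS]; ring
    have e2 : (fun x : E3 => (mulS Q Q) x) = fun x => Q x * Q x := funext fun x => rfl
    rw [e1, e2, integral_const_mul] at h0
    exact h0
  -- (4)
  have h4 : ∀ j : Fin 3, 4 * (∫ x : E3, Q x * Q x * Q x * pd j Q x * x j)
      = - ∫ x : E3, Q x * Q x * (Q x * Q x) := by
    intro j
    have h0 := int_coord_pd (mulS (mulS Q Q) (mulS Q Q)) j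
    have e1 : (fun x : E3 => pd j (mulS (mulS Q Q) (mulS Q Q)) x * x j)
        = fun x => 4 * (Q x * Q x * Q x * pd j Q x * x j) := funext fun x => by
      simp only [pd_mulS, mulS_apply]; ring
    have e2 : (fun x : E3 => (mulS (mulS Q Q) (mulS Q Q)) x)
        = fun x => Q x * Q x * (Q x * Q x) := funext fun x => rfl
    rw [e1, e2, integral_const_mul] at h0
    exact h0
  -- (5)
  have h5 : ∀ j k : Fin 3, 2 * (∫ x : E3, pd k Q x * pd j (pd k Q) x * x j)
      = - ∫ x : E3, pd k Q x * pd k Q x := by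
    intro j k
    have h0 := int_coord_pd (mulS (pd k Q) (pd k Q)) j
    have e1 : (fun x : E3 => pd j (mulS (pd k Q) (pd k Q)) x * x j)
        = fun x => 2 * (pd k Q x * pd j (pd k Q) x * x j) := funext fun x => by
      rw [pd_mulS]; ring
    have e2 : (fun x : E3 => (mulS (pd k Q) (pd k Q)) x)
        = fun x => pd k Q x * pd k Q x := funext fun x => rfl
    rw [e1, e2, integral_const_mul] at h0
    exact h0
  -- (6)
  have h6 : ∀ j k : Fin 3, (∫ x : E3, pd k Q x * pd j (pd k Q) x * x j)
      + (if k = j then ∫ x : E3, pd j Q x * pd k Q x else 0)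
      + (∫ x : E3, pd j Q x * x j * pd k (pd k Q) x) = 0 := by
    intro j k
    by_cases hjk : k = j
    · subst hjk
      have h0 := int_pd_zero (mulS (coordS k (pd k Q)) (pd k Q)) k
        (fun x => (pd k Q x * pd k (pd k Q) x * x k + pd k Q x * pd k Q x)
          + pd k Q x * x k * pd k (pd k Q) x)
        (fun x => by
          rw [← pd_apply]
          simp only [pd_mulS, pd_coordS, coordS_apply]
          simp only [if_true]
          ring)
      have i1 : Integrable (fun x : E3 =>
          pd k Q x * pd k (pd k Q) x * x k + pd k Q x * pd k Q x) :=
        (intS3' (pd k Q) (pd k (pd k Q)) k).add (intS (pd k Q) (pd k Q))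
      rw [integral_add i1 (hci k k),
        integral_add (intS3' (pd k Q) (pd k (pd k Q)) k) (intS (pd k Q) (pd k Q))] at h0
      rw [if_pos rfl]
      linarith [h0]
    · have h0 := int_pd_zero (mulS (coordS j (pd j Q)) (pd k Q)) k
        (fun x => pd k Q x * pd j (pd k Q) x * x j + pd j Q x * x j * pd k (pd k Q) x)
        (fun x => by
          rw [← pd_apply]
          simp only [pd_mulS, pd_coordS, coordS_apply, if_neg hjk, pd_comm]
          ring)
      rw [integral_add (intS3' (pd k Q) (pd j (pd k Q)) j) (hci j k)] at h0
      rw [if_neg hjk]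
      linarith
  -- (7)
  have h7 : ∀ j : Fin 3, (∫ x : E3, Q x * pd j Q x * x j)
      - (∫ x : E3, Q x * Q x * Q x * pd j Q x * x j)
      = ∑ k : Fin 3, ∫ x : E3, pd j Q x * x j * pd k (pd k Q) x := by
    intro j
    rw [← integral_sub (intS3' Q (pd j Q) j)
      ((show Integrable (fun x : E3 => Q x * Q x * Q x * pd j Q x * x j) volume from
        intS3 j (mulS (mulS (mulS Q Q) Q) (pd j Q)))),
      ← integral_finset_sum _ (fun k _ => hci j k)]
    refine integral_congr_ae (Filter.Eventually.of_forall fun x => ?_)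
    simp only [← Finset.mul_sum, hLap x]
    ring
  -- assembly
  have hS : (∫ x : E3, (Q x) ^ 2) = ∫ x : E3, Q x * Q x :=
    integral_congr_ae (Filter.Eventually.of_forall fun x => by ring)
  have hT : (∫ x : E3, (Q x) ^ 4) = ∫ x : E3, Q x * Q x * (Q x * Q x) :=
    integral_congr_ae (Filter.Eventually.of_forall fun x => by ring)
  have hGrad : (∫ x : E3, ‖gradient (⇑Q) x‖ ^ 2)
      = ∑ k : Fin 3, ∫ x : E3, pd k Q x * pd k Q x := by
    rw [← integral_finset_sum _ (fun k _ => intS (pd k Q) (pd k Q))]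
    exact integral_congr_ae (Filter.Eventually.of_forall fun x => norm_gradient_sq Q x)
  rw [Fin.sum_univ_three] at h2 hGrad
  have h10 := h1 0; have h11 := h1 1; have h12 := h1 2
  have h30 := h3 0; have h31 := h3 1; have h32 := h3 2
  have h40 := h4 0; have h41 := h4 1; have h42 := h4 2
  have h500 := h5 0 0; have h501 := h5 0 1; have h502 := h5 0 2
  have h510 := h5 1 0; have h511 := h5 1 1; have h512 := h5 1 2
  have h520 := h5 2 0; have h521 := h5 2 1; have h522 := h5 2 2
  have h600 := h6 0 0; rw [if_pos rfl] at h600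
  have h611 := h6 1 1; rw [if_pos rfl] at h611
  have h622 := h6 2 2; rw [if_pos rfl] at h622
  have h601 := h6 0 1; rw [if_neg (by decide)] at h601
  have h602 := h6 0 2; rw [if_neg (by decide)] at h602
  have h610 := h6 1 0; rw [if_neg (by decide)] at h610
  have h612 := h6 1 2; rw [if_neg (by decide)] at h612
  have h620 := h6 2 0; rw [if_neg (by decide)] at h620
  have h621 := h6 2 1; rw [if_neg (by decide)] at h621
  have h70 := h7 0; rw [Fin.sum_univ_three] at h70
  have h71 := h7 1; rw [Fin.sum_univ_three] at h71
  have h72 := h7 2; rw [Fin.sum_univ_three] at h72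
  constructor
  · rw [hS, hT]
    linarith
  · rw [hS, hGrad]
    linarith
end
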